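/- Let λ be a Young diagram and let i ∈ B⁻(λ). Then Σ_{j ∈ B⁺(λ)} d_{λ ⊞ j} / (j − i) = 0. (Each term is well defined since B⁺(λ) ∩ B⁻(λ) = ∅, so j ≠ i for every j ∈ B⁺(λ).) -/

import Mathlib

/-- The content of a cell `(r, c)` (row `r`, column `c`) is `c - r`. -/
def content (x : ℕ × ℕ) : ℤ := (x.2 : ℤ) - (x.1 : ℤ)

/-- `x` is an addable box of the Young diagram `μ`: `x ∉ μ` and `μ ∪ {x}` is again a
Young diagram. -/
def Addable (μ : YoungDiagram) (x : ℕ × ℕ) : Prop :=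
  x ∉ μ ∧ IsLowerSet (↑(insert x μ.cells) : Set (ℕ × ℕ))

/-- `x` is a removable box of the Young diagram `μ`: `x ∈ μ` and `μ ∖ {x}` is again a
Young diagram. -/
def Removable (μ : YoungDiagram) (x : ℕ × ℕ) : Prop :=
  x ∈ μ ∧ IsLowerSet (↑(μ.cells.erase x) : Set (ℕ × ℕ))

/-- `B⁺(μ)`: the set of contents of addable boxes of `μ`. -/
def Bplus (μ : YoungDiagram) : Set ℤ := {i | ∃ x, Addable μ x ∧ content x = i}

/-- `B⁻(μ)`: the set of contents of removable boxes of `μ`. -/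
def Bminus (μ : YoungDiagram) : Set ℤ := {i | ∃ x, Removable μ x ∧ content x = i}

/-- `AddBox l i m` means `m = l ⊞ i`, i.e. `m` is obtained from `l` by adding an addable
box of content `i`. -/
def AddBox (l : YoungDiagram) (i : ℤ) (m : YoungDiagram) : Prop :=
  ∃ x, Addable l x ∧ content x = i ∧ m.cells = insert x l.cells

/-- `RemoveBox l i m` means `m = l ⊟ i`, i.e. `m` is obtained from `l` by removing a
removable box of content `i`. -/
def RemoveBox (l : YoungDiagram) (i : ℤ) (m : YoungDiagram) : Prop :=
  ∃ x, Removable l x ∧ content x = i ∧ m.cells = l.cells.erase x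

/-- The hook length `h_μ(r, c)` of a cell of `μ`. -/
def hookLen (μ : YoungDiagram) (x : ℕ × ℕ) : ℕ :=
  (μ.cells.filter (fun y => (y.1 = x.1 ∧ x.2 ≤ y.2) ∨ (y.2 = x.2 ∧ x.1 ≤ y.1))).card

/-- `d_μ = |μ|! / ∏ hook lengths`, the dimension of the irreducible `ℚS_{|μ|}`-module
indexed by `μ` (hook length formula). -/
def dimPart (μ : YoungDiagram) : ℚ :=
  (Nat.factorial μ.card : ℚ) / ∏ x ∈ μ.cells, (hookLen μ x : ℚ)

open Finset Polynomial

def AddP (ν : YoungDiagram) (c : ℕ) : Prop := c = 0 ∨ ν.colLen c < ν.colLen (c-1)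
def DropP (ν : YoungDiagram) (c : ℕ) : Prop := ν.colLen (c+1) < ν.colLen c
instance (ν : YoungDiagram) : DecidablePred (AddP ν) := fun c => by unfold AddP; infer_instance
instance (ν : YoungDiagram) : DecidablePred (DropP ν) := fun c => by unfold DropP; infer_instance
def G (ν : YoungDiagram) (c : ℕ) : ℤ := (c : ℤ) - ν.colLen c


lemma tel_aux (f : ℕ → ℕ) (hf : ∀ c, f (c+1) ≤ f c) (A : ℚ) (m : ℕ) :
    (∏ j ∈ range (m+1), (A - ((j:ℚ) - f j) - 1)) *
      ∏ j ∈ (range (m+1)).filter (fun c => c = 0 ∨ f c < f (c-1)), (A - ((j:ℚ) - f j)) =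
    (∏ j ∈ range (m+1), (A - ((j:ℚ) - f j))) *
      (∏ j ∈ (range m).filter (fun c => f (c+1) < f c), (A - ((j:ℚ) - f j) - 1)) *
      (A - ((m:ℚ) - f m) - 1) := by
  induction m with
  | zero =>
    rw [show (1:ℕ)=0+1 from rfl, range_one, filter_singleton, if_pos (by norm_num)]
    simp only [range_zero, filter_empty, prod_empty, prod_singleton]
    ring
  | succ m ih =>
    have hins2 : (range (m+2)).filter (fun c => c = 0 ∨ f c < f (c-1)) =
        if (f (m+1) < f m) then insert (m+1) ((range (m+1)).filter (fun c => c = 0 ∨ f c < f (c-1)))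
        else (range (m+1)).filter (fun c => c = 0 ∨ f c < f (c-1)) := by
      rw [range_add_one, filter_insert]
      congr 1
      simp
    have hins3 : (range (m+1)).filter (fun c => f (c+1) < f c) =
        if (f (m+1) < f m) then insert m ((range m).filter (fun c => f (c+1) < f c))
        else (range m).filter (fun c => f (c+1) < f c) := by
      rw [range_add_one, filter_insert]
    by_cases hd : f (m+1) < f m
    · rw [hins2, hins3, if_pos hd, if_pos hd, show range (m+2) = insert (m+1) (range (m+1)) from
        (range_add_one ..), prod_insert (by simp), prod_insert (by simp), prod_insert (by simp),
        prod_insert (by simp)]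
      push_cast
      linear_combination ((A - ((m:ℚ) + 1 - (f (m+1):ℚ))) * (A - ((m:ℚ)+1 - (f (m+1):ℚ)) - 1)) * ih
    · have he : (f (m+1) : ℚ) = f m := by
        exact_mod_cast congrArg (Nat.cast (R := ℚ)) (le_antisymm (hf m) (not_lt.mp hd))
      rw [hins2, hins3, if_neg hd, if_neg hd, show range (m+2) = insert (m+1) (range (m+1)) from
        (range_add_one ..), prod_insert (by simp), prod_insert (by simp)]
      push_cast
      rw [he]
      linear_combination (A - ((m:ℚ) + 1 - (f m:ℚ)) - 1) * ih



lemma hook_formula (ν : YoungDiagram) {r c : ℕ} (h : (r, c) ∈ ν) :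
    hookLen ν (r, c) + r + c + 1 = ν.rowLen r + ν.colLen c := by
  have hr : c < ν.rowLen r := YoungDiagram.mem_iff_lt_rowLen.mp h
  have hc : r < ν.colLen c := YoungDiagram.mem_iff_lt_colLen.mp h
  have hset : ν.cells.filter (fun y => (y.1 = r ∧ c ≤ y.2) ∨ (y.2 = c ∧ r ≤ y.1)) =
      ({r} ×ˢ Ico c (ν.rowLen r)) ∪ (Ico r (ν.colLen c) ×ˢ {c}) := by
    ext ⟨a, b⟩
    simp only [mem_filter, mem_union, mem_product, mem_singleton, mem_Ico,
      YoungDiagram.mem_cells]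
    constructor
    · rintro ⟨hmem, (⟨rfl, hcb⟩ | ⟨rfl, hra⟩)⟩
      · exact Or.inl ⟨rfl, hcb, YoungDiagram.mem_iff_lt_rowLen.mp hmem⟩
      · exact Or.inr ⟨⟨hra, YoungDiagram.mem_iff_lt_colLen.mp hmem⟩, rfl⟩
    · rintro (⟨rfl, hcb, hb⟩ | ⟨⟨hra, ha⟩, rfl⟩)
      · exact ⟨YoungDiagram.mem_iff_lt_rowLen.mpr hb, Or.inl ⟨rfl, hcb⟩⟩
      · exact ⟨YoungDiagram.mem_iff_lt_colLen.mpr ha, Or.inr ⟨rfl, hra⟩⟩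
  have hint : (({r} ×ˢ Ico c (ν.rowLen r)) ∩ (Ico r (ν.colLen c) ×ˢ {c}) : Finset (ℕ × ℕ))
      = {(r, c)} := by
    ext ⟨a, b⟩
    simp only [mem_inter, mem_product, mem_singleton, mem_Ico, Prod.mk.injEq]
    constructor
    · rintro ⟨⟨rfl, hb, _⟩, _, rfl⟩; exact ⟨rfl, rfl⟩
    · rintro ⟨rfl, rfl⟩; exact ⟨⟨rfl, le_rfl, hr⟩, ⟨le_rfl, hc⟩, rfl⟩
  have := card_union_add_card_inter ({r} ×ˢ Ico c (ν.rowLen r)) (Ico r (ν.colLen c) ×ˢ {c})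
  rw [hint, card_singleton] at this
  have hcard : hookLen ν (r, c) + 1 = (ν.rowLen r - c) + (ν.colLen c - r) := by
    rw [hookLen, hset, this]
    simp [Nat.card_Ico]
  omega





lemma addable_iff (ν : YoungDiagram) (x : ℕ × ℕ) :
    Addable ν x ↔ x.1 = ν.colLen x.2 ∧ AddP ν x.2 := by
  obtain ⟨r, c⟩ := x
  dsimp only
  constructor
  · rintro ⟨hx, hl⟩
    simp only [YoungDiagram.mem_cells, YoungDiagram.mem_iff_lt_colLen, not_lt] at hx
    have hr : r = ν.colLen c := by
      refine le_antisymm ?_ hx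
      by_contra hlt
      push_neg at hlt
      have hmem : (ν.colLen c, c) ∈ (↑(insert (r, c) ν.cells) : Set (ℕ × ℕ)) :=
        hl (Prod.mk_le_mk.mpr ⟨hlt.le, le_rfl⟩) (by simp)
      simp only [coe_insert, Set.mem_insert_iff, Prod.mk.injEq, mem_coe,
        YoungDiagram.mem_cells, YoungDiagram.mem_iff_lt_colLen] at hmem
      rcases hmem with ⟨h1, _⟩ | h2
      · omega
      · omega
    refine ⟨hr, ?_⟩
    rcases Nat.eq_zero_or_pos c with hc | hc
    · exact Or.inl hc
    · refine Or.inr ?_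
      have hmem : (r, c-1) ∈ (↑(insert (r, c) ν.cells) : Set (ℕ × ℕ)) :=
        hl (Prod.mk_le_mk.mpr ⟨le_rfl, Nat.sub_le _ _⟩) (by simp)
      simp only [coe_insert, Set.mem_insert_iff, Prod.mk.injEq, mem_coe,
        YoungDiagram.mem_cells, YoungDiagram.mem_iff_lt_colLen] at hmem
      rcases hmem with ⟨_, h1⟩ | h2
      · omega
      · omega
  · rintro ⟨hr, hadd⟩
    subst hr
    constructor
    · simp [YoungDiagram.mem_iff_lt_colLen]
    · rintro ⟨a1, a2⟩ ⟨b1, b2⟩ hab hb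
      simp only [coe_insert, Set.mem_insert_iff, mem_coe, YoungDiagram.mem_cells] at hb ⊢
      have h1 : b1 ≤ a1 := hab.1
      have h2 : b2 ≤ a2 := hab.2
      rcases hb with hb | hb
      · injection hb with ha1 ha2
        rw [ha1] at h1
        rw [ha2] at h2
        by_cases hbc : b2 = c
        · subst hbc
          rcases Nat.lt_or_ge b1 (ν.colLen b2) with h | h
          · exact Or.inr (YoungDiagram.mem_iff_lt_colLen.mpr h)
          · exact Or.inl (by rw [Prod.mk.injEq]; omega)
        · refine Or.inr (YoungDiagram.mem_iff_lt_colLen.mpr ?_)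
          rcases hadd with h0 | hstep
          · omega
          · have : ν.colLen (c-1) ≤ ν.colLen b2 := ν.colLen_anti _ _ (by omega)
            omega
      · exact Or.inr (ν.isLowerSet hab hb)
  
lemma removable_imp (ν : YoungDiagram) (x : ℕ × ℕ) (h : Removable ν x) :
    x.1 + 1 = ν.colLen x.2 ∧ DropP ν x.2 := by
  obtain ⟨r, c⟩ := x
  obtain ⟨hx, hl⟩ := h
  dsimp only at *
  simp only [YoungDiagram.mem_cells, YoungDiagram.mem_iff_lt_colLen] at hx
  have hnot : (r, c) ∉ (↑(ν.cells.erase (r, c)) : Set (ℕ × ℕ)) := by simp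
  constructor
  · by_contra hne
    have hmem : (r+1, c) ∈ (↑(ν.cells.erase (r, c)) : Set (ℕ × ℕ)) := by
      simp only [coe_erase, Set.mem_diff, mem_coe, YoungDiagram.mem_cells,
        YoungDiagram.mem_iff_lt_colLen, Set.mem_singleton_iff, Prod.mk.injEq]
      exact ⟨by omega, by omega⟩
    exact hnot (hl (Prod.mk_le_mk.mpr ⟨by omega, le_rfl⟩) hmem)
  · by_contra hne
    have hge : ν.colLen c ≤ ν.colLen (c+1) := by
      have := ν.colLen_anti c (c+1) (by omega)
      unfold DropP at hne
      omega
    have hmem : (r, c+1) ∈ (↑(ν.cells.erase (r, c)) : Set (ℕ × ℕ)) := by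
      simp only [coe_erase, Set.mem_diff, mem_coe, YoungDiagram.mem_cells,
        YoungDiagram.mem_iff_lt_colLen, Set.mem_singleton_iff, Prod.mk.injEq]
      exact ⟨by omega, by omega⟩
    exact hnot (hl (Prod.mk_le_mk.mpr ⟨le_rfl, by omega⟩) hmem)

lemma rowLen_colLen_of_addP (ν : YoungDiagram) {c : ℕ} (h : AddP ν c) :
    ν.rowLen (ν.colLen c) = c := by
  refine le_antisymm ?_ ?_
  · by_contra hlt
    push_neg at hlt
    have := YoungDiagram.mem_iff_lt_rowLen.mpr hlt
    rw [YoungDiagram.mem_iff_lt_colLen] at this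
    omega
  · rcases h with h0 | hstep
    · omega
    · have hc : 0 < c := by
        rcases Nat.eq_zero_or_pos c with h | h
        · subst h; simp at hstep
        · exact h
      have : (ν.colLen c, c - 1) ∈ ν := by
        rw [YoungDiagram.mem_iff_lt_colLen]; omega
      rw [YoungDiagram.mem_iff_lt_rowLen] at this
      omega

lemma rowLen_of_dropP (ν : YoungDiagram) {c : ℕ} (h : DropP ν c) :
    ν.rowLen (ν.colLen c - 1) = c + 1 := by
  have hpos : 0 < ν.colLen c := by unfold DropP at h; omega
  refine le_antisymm ?_ ?_
  · by_contra hlt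
    push_neg at hlt
    have := YoungDiagram.mem_iff_lt_rowLen.mpr (show c + 1 < ν.rowLen (ν.colLen c - 1) by omega)
    rw [YoungDiagram.mem_iff_lt_colLen] at this
    unfold DropP at h
    omega
  · have : (ν.colLen c - 1, c) ∈ ν := by rw [YoungDiagram.mem_iff_lt_colLen]; omega
    rw [YoungDiagram.mem_iff_lt_rowLen] at this
    omega

lemma addP_transpose (ν : YoungDiagram) {c : ℕ} (h : AddP ν c) :
    AddP ν.transpose (ν.colLen c) := by
  rcases Nat.eq_zero_or_pos (ν.colLen c) with h0 | hpos
  · exact Or.inl h0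
  · refine Or.inr ?_
    rw [YoungDiagram.colLen_transpose, YoungDiagram.colLen_transpose,
      rowLen_colLen_of_addP ν h]
    have : (ν.colLen c - 1, c) ∈ ν := by rw [YoungDiagram.mem_iff_lt_colLen]; omega
    rw [YoungDiagram.mem_iff_lt_rowLen] at this
    omega

lemma dropP_transpose (ν : YoungDiagram) {c : ℕ} (h : DropP ν c) :
    DropP ν.transpose (ν.colLen c - 1) := by
  have hpos : 0 < ν.colLen c := by unfold DropP at h; omega
  unfold DropP
  rw [YoungDiagram.colLen_transpose, YoungDiagram.colLen_transpose,
    show ν.colLen c - 1 + 1 = ν.colLen c by omega, rowLen_of_dropP ν h]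
  have : ν.rowLen (ν.colLen c) ≤ c := by
    by_contra hlt
    push_neg at hlt
    have := YoungDiagram.mem_iff_lt_rowLen.mpr hlt
    rw [YoungDiagram.mem_iff_lt_colLen] at this
    omega
  omega

lemma colLen_lt_of_addP (ν : YoungDiagram) {c₀ c : ℕ} (h : AddP ν c) (hlt : c₀ < c) :
    ν.colLen c < ν.colLen c₀ := by
  rcases h with h0 | hstep
  · omega
  · have := ν.colLen_anti c₀ (c-1) (by omega)
    omega






lemma G_strictMono (ν : YoungDiagram) : StrictMono (G ν) := by
  apply strictMono_nat_of_lt_succ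
  intro n
  have := ν.colLen_anti n (n+1) (by omega)
  unfold G
  push_cast
  omega


lemma side_prod (ν : YoungDiagram) (c₀ : ℕ) (h : AddP ν c₀) :
    (∏ j ∈ range c₀, (hookLen ν (ν.colLen c₀, j) : ℚ)) *
      ∏ c ∈ (range c₀).filter (AddP ν), ((G ν c₀ - G ν c : ℤ) : ℚ) =
    (∏ j ∈ range c₀, ((hookLen ν (ν.colLen c₀, j) : ℚ) + 1)) *
      ∏ c ∈ (range c₀).filter (DropP ν), ((G ν c₀ - G ν c - 1 : ℤ) : ℚ) := by
  -- hook values on row `colLen c₀`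
  have hrow : ν.rowLen (ν.colLen c₀) = c₀ := rowLen_colLen_of_addP ν h
  have hval : ∀ j ∈ range c₀, (hookLen ν (ν.colLen c₀, j) : ℚ)
      = ((c₀ : ℚ) - ν.colLen c₀) - ((j:ℚ) - ν.colLen j) - 1 := by
    intro j hj
    rw [mem_range] at hj
    have hmem : (ν.colLen c₀, j) ∈ ν := by
      rw [YoungDiagram.mem_iff_lt_colLen]
      rcases h with h0 | hstep
      · omega
      · have := ν.colLen_anti j (c₀ - 1) (by omega)
        omega
    have hf := hook_formula ν hmem
    rw [hrow] at hf
    have : (hookLen ν (ν.colLen c₀, j) : ℚ) + ν.colLen c₀ + j + 1 = c₀ + ν.colLen j := by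
      exact_mod_cast congrArg (Nat.cast (R := ℚ)) hf
    linarith
  rcases Nat.eq_zero_or_pos c₀ with rfl | hpos
  · simp
  · obtain ⟨m, rfl⟩ : ∃ m, c₀ = m + 1 := ⟨c₀ - 1, by omega⟩
    have hdrop : DropP ν m := by
      rcases h with h0 | hstep
      · omega
      · simpa [DropP] using hstep
    have key := tel_aux ν.colLen (fun c => ν.colLen_anti c (c+1) (by omega))
      ((m+1 : ℚ) - ν.colLen (m+1)) m
    have hfold : (range (m+1)).filter (DropP ν) = insert m ((range m).filter (DropP ν)) := by
      rw [range_add_one, filter_insert, if_pos hdrop]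
    calc (∏ j ∈ range (m+1), (hookLen ν (ν.colLen (m+1), j) : ℚ)) *
          ∏ c ∈ (range (m+1)).filter (AddP ν), ((G ν (m+1) - G ν c : ℤ) : ℚ)
        = (∏ j ∈ range (m+1), (((m+1:ℚ) - ν.colLen (m+1)) - ((j:ℚ) - ν.colLen j) - 1)) *
          ∏ c ∈ (range (m+1)).filter (fun c => c = 0 ∨ ν.colLen c < ν.colLen (c-1)),
            (((m+1:ℚ) - ν.colLen (m+1)) - ((c:ℚ) - ν.colLen c)) := by
          congr 1
          · refine prod_congr rfl fun j hj => ?_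
            rw [hval j hj]; push_cast; ring
          · refine prod_congr rfl fun c _ => ?_
            unfold G; push_cast; ring
      _ = (∏ j ∈ range (m+1), (((m+1:ℚ) - ν.colLen (m+1)) - ((j:ℚ) - ν.colLen j))) *
          (∏ j ∈ (range m).filter (fun c => ν.colLen (c+1) < ν.colLen c),
            (((m+1:ℚ) - ν.colLen (m+1)) - ((j:ℚ) - ν.colLen j) - 1)) *
          (((m+1:ℚ) - ν.colLen (m+1)) - ((m:ℚ) - ν.colLen m) - 1) := key
      _ = (∏ j ∈ range (m+1), ((hookLen ν (ν.colLen (m+1), j) : ℚ) + 1)) *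
          ∏ c ∈ (range (m+1)).filter (DropP ν), ((G ν (m+1) - G ν c - 1 : ℤ) : ℚ) := by
          rw [hfold, prod_insert (by simp)]
          rw [show ∀ a b c : ℚ, a * b * c = (a * (c * b)) from fun _ _ _ => by ring]
          congr 1
          · refine prod_congr rfl fun j hj => ?_
            rw [hval j hj]; push_cast; ring
          · congr 1
            · unfold G; push_cast; ring
            · refine prod_congr rfl fun c _ => ?_
              unfold G; push_cast; ring




/-- removable columns -/
def RC (ν : YoungDiagram) : Finset ℕ := (range (ν.rowLen 0)).filter (DropP ν)
/-- addable columns -/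
def AC (ν : YoungDiagram) : Finset ℕ := insert 0 ((RC ν).image (· + 1))


lemma mem_RC {ν : YoungDiagram} {c : ℕ} : c ∈ RC ν ↔ DropP ν c := by
  rw [RC, mem_filter, mem_range]
  refine ⟨fun h => h.2, fun h => ⟨?_, h⟩⟩
  have hpos : 0 < ν.colLen c := by unfold DropP at h; omega
  have : (0, c) ∈ ν := by rw [YoungDiagram.mem_iff_lt_colLen]; omega
  rwa [YoungDiagram.mem_iff_lt_rowLen] at this

lemma mem_AC {ν : YoungDiagram} {c : ℕ} : c ∈ AC ν ↔ AddP ν c := by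
  rw [AC, mem_insert, mem_image]
  constructor
  · rintro (rfl | ⟨d, hd, rfl⟩)
    · exact Or.inl rfl
    · rw [mem_RC] at hd
      exact Or.inr (by simpa [DropP] using hd)
  · rintro (rfl | hstep)
    · exact Or.inl rfl
    · rcases Nat.eq_zero_or_pos c with rfl | hpos
      · exact Or.inl rfl
      · refine Or.inr ⟨c - 1, mem_RC.mpr ?_, by omega⟩
        unfold DropP
        rw [show c - 1 + 1 = c by omega]
        exact hstep

lemma card_AC (ν : YoungDiagram) : #(AC ν) = #(RC ν) + 1 := by
  rw [AC, card_insert_of_notMem (by simp), card_image_of_injective _ (add_left_injective 1)]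

lemma mem_nu_of_lt_colLen {ν : YoungDiagram} {r c : ℕ} (h : r < ν.colLen c) : (r, c) ∈ ν :=
  YoungDiagram.mem_iff_lt_colLen.mpr h

lemma hook_transpose (ν : YoungDiagram) {r c : ℕ} (h : (r, c) ∈ ν) :
    hookLen ν.transpose (c, r) = hookLen ν (r, c) := by
  have h' : (c, r) ∈ ν.transpose := by
    rw [YoungDiagram.mem_transpose]; exact h
  have h1 := hook_formula ν.transpose h'
  have h2 := hook_formula ν h
  rw [YoungDiagram.rowLen_transpose, YoungDiagram.colLen_transpose] at h1
  omega

/-- Conversion of the transpose addable-column product to this diagram's addable columns. -/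
lemma addT_prod_conv (ν : YoungDiagram) (c₀ : ℕ) (h : AddP ν c₀) :
    ∏ c ∈ (AC ν).filter (fun c => c₀ < c), ((G ν c - G ν c₀ : ℤ) : ℚ) =
    ∏ r ∈ (range (ν.colLen c₀)).filter (AddP ν.transpose),
      ((G ν.transpose (ν.colLen c₀) - G ν.transpose r : ℤ) : ℚ) := by
  refine prod_nbij' (fun c => ν.colLen c) (fun r => ν.rowLen r) ?_ ?_ ?_ ?_ ?_
  · intro c hc
    rw [mem_filter] at hc
    obtain ⟨hc1, hc2⟩ := hc
    rw [mem_AC] at hc1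
    rw [mem_filter, mem_range]
    exact ⟨colLen_lt_of_addP ν hc1 hc2, addP_transpose ν hc1⟩
  · intro r hr
    rw [mem_filter, mem_range] at hr
    obtain ⟨hr1, hr2⟩ := hr
    have := addP_transpose ν.transpose hr2
    rw [YoungDiagram.transpose_transpose, YoungDiagram.colLen_transpose] at this
    rw [mem_filter, mem_AC]
    refine ⟨this, ?_⟩
    have h2 := colLen_lt_of_addP ν.transpose (addP_transpose ν h) hr1
    rw [YoungDiagram.colLen_transpose, YoungDiagram.colLen_transpose,
      rowLen_colLen_of_addP ν h] at h2
    exact h2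
  · intro c hc
    rw [mem_filter, mem_AC] at hc
    exact rowLen_colLen_of_addP ν hc.1
  · intro r hr
    rw [mem_filter, mem_range] at hr
    have := rowLen_colLen_of_addP ν.transpose hr.2
    rwa [YoungDiagram.colLen_transpose, YoungDiagram.rowLen_transpose] at this
  · intro c hc
    rw [mem_filter, mem_AC] at hc
    have hrl : ν.rowLen (ν.colLen c) = c := rowLen_colLen_of_addP ν hc.1
    have hrl0 : ν.rowLen (ν.colLen c₀) = c₀ := rowLen_colLen_of_addP ν h
    congr 1
    unfold G
    rw [YoungDiagram.colLen_transpose, YoungDiagram.colLen_transpose, hrl, hrl0]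
    push_cast
    ring

/-- Conversion of the transpose drop-column product to this diagram's drop columns. -/
lemma dropT_prod_conv (ν : YoungDiagram) (c₀ : ℕ) (h : AddP ν c₀) :
    ∏ c ∈ (RC ν).filter (fun c => c₀ ≤ c), ((G ν c + 1 - G ν c₀ : ℤ) : ℚ) =
    ∏ r ∈ (range (ν.colLen c₀)).filter (DropP ν.transpose),
      ((G ν.transpose (ν.colLen c₀) - G ν.transpose r - 1 : ℤ) : ℚ) := by
  refine prod_nbij' (fun c => ν.colLen c - 1) (fun r => ν.rowLen r - 1) ?_ ?_ ?_ ?_ ?_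
  · intro c hc
    rw [mem_filter] at hc
    obtain ⟨hc1, hc2⟩ := hc
    rw [mem_RC] at hc1
    rw [mem_filter, mem_range]
    refine ⟨?_, dropP_transpose ν hc1⟩
    have h1 : ν.colLen c ≤ ν.colLen c₀ := ν.colLen_anti c₀ c hc2
    have h2 : 0 < ν.colLen c := by unfold DropP at hc1; omega
    omega
  · intro r hr
    rw [mem_filter, mem_range] at hr
    obtain ⟨hr1, hr2⟩ := hr
    have hd := dropP_transpose ν.transpose hr2
    rw [YoungDiagram.transpose_transpose, YoungDiagram.colLen_transpose] at hd
    rw [mem_filter, mem_RC]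
    refine ⟨hd, ?_⟩
    -- c₀ ≤ rowLen r - 1, i.e. c₀ < rowLen r, i.e. (r, c₀) ∈ ν
    have : (r, c₀) ∈ ν := mem_nu_of_lt_colLen hr1
    rw [YoungDiagram.mem_iff_lt_rowLen] at this
    omega
  · intro c hc
    rw [mem_filter, mem_RC] at hc
    have := rowLen_of_dropP ν hc.1
    omega
  · intro r hr
    rw [mem_filter, mem_range] at hr
    have := rowLen_of_dropP ν.transpose hr.2
    rw [YoungDiagram.colLen_transpose, YoungDiagram.rowLen_transpose] at this
    omega
  · intro c hc
    rw [mem_filter, mem_RC] at hc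
    have hrl : ν.rowLen (ν.colLen c - 1) = c + 1 := rowLen_of_dropP ν hc.1
    have hrl0 : ν.rowLen (ν.colLen c₀) = c₀ := rowLen_colLen_of_addP ν h
    have hpos : 0 < ν.colLen c := by have := hc.1; unfold DropP at this; omega
    congr 1
    unfold G
    rw [YoungDiagram.colLen_transpose, YoungDiagram.colLen_transpose, hrl, hrl0]
    have : ((ν.colLen c - 1 : ℕ) : ℤ) = (ν.colLen c : ℤ) - 1 := by
      omega
    rw [this]
    push_cast
    ring

lemma card_conv (ν : YoungDiagram) (c₀ : ℕ) :
    #((RC ν).filter (fun c => c₀ ≤ c)) = #((AC ν).filter (fun c => c₀ < c)) := by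
  refine card_nbij' (fun c => c + 1) (fun c => c - 1) ?_ ?_ ?_ ?_
  · intro c hc
    rw [mem_coe, mem_filter] at hc ⊢
    rw [mem_RC] at hc
    rw [mem_AC]
    dsimp only
    exact ⟨Or.inr (by simpa [DropP] using hc.1), by omega⟩
  · intro c hc
    rw [mem_coe, mem_filter] at hc ⊢
    rw [mem_AC] at hc
    obtain ⟨h1, h2⟩ := hc
    dsimp only
    rcases h1 with rfl | hstep
    · omega
    · rw [mem_RC]
      refine ⟨?_, by omega⟩
      unfold DropP
      rw [show c - 1 + 1 = c by omega]
      exact hstep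
  · intro c hc; dsimp only; omega
  · intro c hc
    rw [mem_coe, mem_filter, mem_AC] at hc
    dsimp only
    omega

lemma corner_not_mem (ν : YoungDiagram) (c₀ : ℕ) : (ν.colLen c₀, c₀) ∉ ν := by
  rw [YoungDiagram.mem_iff_lt_colLen]; omega

lemma hookLen_insert_self (ν μ : YoungDiagram) (c₀ : ℕ)
    (hμ : μ.cells = insert (ν.colLen c₀, c₀) ν.cells) :
    hookLen μ (ν.colLen c₀, c₀) = 1 := by
  rw [hookLen, hμ, filter_insert, if_pos (Or.inl ⟨rfl, le_rfl⟩)]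
  rw [card_insert_of_notMem (fun hmem => corner_not_mem ν c₀ (mem_of_mem_filter _ hmem))]
  have : ν.cells.filter (fun y => (y.1 = (ν.colLen c₀, c₀).1 ∧ (ν.colLen c₀, c₀).2 ≤ y.2) ∨
      (y.2 = (ν.colLen c₀, c₀).2 ∧ (ν.colLen c₀, c₀).1 ≤ y.1)) = ∅ := by
    rw [eq_empty_iff_forall_notMem]
    rintro ⟨a, b⟩ hy
    rw [mem_filter] at hy
    obtain ⟨hmem, hcond⟩ := hy
    dsimp only at hcond
    rcases hcond with ⟨h1, h2⟩ | ⟨h1, h2⟩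
    · exact corner_not_mem ν c₀ (ν.up_left_mem (le_of_eq h1.symm) h2 hmem)
    · exact corner_not_mem ν c₀ (ν.up_left_mem h2 (le_of_eq h1.symm) hmem)
  rw [this]
  simp

lemma hookLen_insert_of_mem (ν μ : YoungDiagram) (c₀ : ℕ) (h : AddP ν c₀)
    (hμ : μ.cells = insert (ν.colLen c₀, c₀) ν.cells) {y : ℕ × ℕ} (hy : y ∈ ν.cells) :
    (hookLen μ y : ℚ) = (hookLen ν y : ℚ) +
      (if y.1 = ν.colLen c₀ ∨ y.2 = c₀ then 1 else 0) := by
  have hr : ν.rowLen (ν.colLen c₀) = c₀ := rowLen_colLen_of_addP ν h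
  have hiff : (((ν.colLen c₀, c₀).1 = y.1 ∧ y.2 ≤ (ν.colLen c₀, c₀).2) ∨
      ((ν.colLen c₀, c₀).2 = y.2 ∧ y.1 ≤ (ν.colLen c₀, c₀).1)) ↔
      (y.1 = ν.colLen c₀ ∨ y.2 = c₀) := by
    dsimp only
    constructor
    · rintro (⟨h1, _⟩ | ⟨h1, _⟩)
      · exact Or.inl h1.symm
      · exact Or.inr h1.symm
    · rw [YoungDiagram.mem_cells] at hy
      rintro (h1 | h1)
      · refine Or.inl ⟨h1.symm, ?_⟩
        have : (y.1, y.2) ∈ ν := by simpa using hy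
        rw [YoungDiagram.mem_iff_lt_rowLen, h1, hr] at this
        omega
      · refine Or.inr ⟨h1.symm, ?_⟩
        have : (y.1, y.2) ∈ ν := by simpa using hy
        rw [YoungDiagram.mem_iff_lt_colLen, h1] at this
        omega
  rw [hookLen, hookLen, hμ, filter_insert]
  by_cases hor : y.1 = ν.colLen c₀ ∨ y.2 = c₀
  · rw [if_pos (hiff.mpr hor), if_pos hor,
      card_insert_of_notMem (fun hmem => corner_not_mem ν c₀ (mem_of_mem_filter _ hmem))]
    push_cast
    ring
  · rw [if_neg (fun hp => hor (hiff.mp hp)), if_neg hor]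
    push_cast
    ring

lemma prod_split (ν : YoungDiagram) (r₀ c₀ : ℕ) (hr : ν.rowLen r₀ = c₀) (hc : ν.colLen c₀ = r₀)
    (F : ℕ × ℕ → ℚ) :
    ∏ y ∈ ν.cells, F y = (∏ j ∈ range c₀, F (r₀, j)) * (∏ r ∈ range r₀, F (r, c₀)) *
      ∏ y ∈ ν.cells.filter (fun y => ¬(y.1 = r₀ ∨ y.2 = c₀)), F y := by
  classical
  rw [← prod_filter_mul_prod_filter_not ν.cells (fun y => y.1 = r₀) F]
  rw [← prod_filter_mul_prod_filter_not (ν.cells.filter (fun y => ¬ y.1 = r₀))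
    (fun y => y.2 = c₀) F]
  have h1 : ν.cells.filter (fun y => y.1 = r₀) = {r₀} ×ˢ range c₀ := by
    ext ⟨a, b⟩
    simp only [mem_filter, mem_product, mem_singleton, mem_range, YoungDiagram.mem_cells]
    constructor
    · rintro ⟨hmem, rfl⟩
      rw [YoungDiagram.mem_iff_lt_rowLen, hr] at hmem
      exact ⟨rfl, hmem⟩
    · rintro ⟨rfl, hb⟩
      rw [YoungDiagram.mem_iff_lt_rowLen, hr]
      exact ⟨hb, rfl⟩
  have h2 : (ν.cells.filter (fun y => ¬ y.1 = r₀)).filter (fun y => y.2 = c₀)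
      = range r₀ ×ˢ {c₀} := by
    ext ⟨a, b⟩
    simp only [mem_filter, mem_product, mem_singleton, mem_range, YoungDiagram.mem_cells]
    constructor
    · rintro ⟨⟨hmem, hne⟩, rfl⟩
      rw [YoungDiagram.mem_iff_lt_colLen, hc] at hmem
      exact ⟨hmem, rfl⟩
    · rintro ⟨ha, rfl⟩
      rw [YoungDiagram.mem_iff_lt_colLen, hc]
      exact ⟨⟨ha, by omega⟩, rfl⟩
  have h3 : (ν.cells.filter (fun y => ¬ y.1 = r₀)).filter (fun y => ¬ y.2 = c₀)
      = ν.cells.filter (fun y => ¬(y.1 = r₀ ∨ y.2 = c₀)) := by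
    ext y
    simp only [mem_filter]
    tauto
  rw [h1, h2, h3, prod_product, prod_singleton, prod_product]
  rw [mul_assoc]
  congr 1
  congr 1
  exact prod_congr rfl fun r _ => prod_singleton ..

set_option maxHeartbeats 2000000 in
lemma hook_ratio (ν μ : YoungDiagram) (c₀ : ℕ) (h : AddP ν c₀)
    (hμ : μ.cells = insert (ν.colLen c₀, c₀) ν.cells) :
    (∏ y ∈ μ.cells, (hookLen μ y : ℚ)) * ∏ c ∈ RC ν, ((G ν c₀ - G ν c - 1 : ℤ) : ℚ)
    = (∏ y ∈ ν.cells, (hookLen ν y : ℚ)) * ∏ c ∈ (AC ν).erase c₀, ((G ν c₀ - G ν c : ℤ) : ℚ) := by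
  classical
  have hr : ν.rowLen (ν.colLen c₀) = c₀ := rowLen_colLen_of_addP ν h
  set r₀ := ν.colLen c₀ with hr₀
  -- the six basic products
  set R1 : ℚ := ∏ j ∈ range c₀, (hookLen ν (r₀, j) : ℚ) with hR1
  set R1' : ℚ := ∏ j ∈ range c₀, ((hookLen ν (r₀, j) : ℚ) + 1) with hR1'
  set C1 : ℚ := ∏ r ∈ range r₀, (hookLen ν (r, c₀) : ℚ) with hC1
  set C1' : ℚ := ∏ r ∈ range r₀, ((hookLen ν (r, c₀) : ℚ) + 1) with hC1'
  set U : ℚ := ∏ c ∈ (range c₀).filter (AddP ν), ((G ν c₀ - G ν c : ℤ) : ℚ) with hU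
  set V : ℚ := ∏ c ∈ (range c₀).filter (DropP ν), ((G ν c₀ - G ν c - 1 : ℤ) : ℚ) with hV
  set U2 : ℚ := ∏ c ∈ (AC ν).filter (fun c => c₀ < c), ((G ν c - G ν c₀ : ℤ) : ℚ) with hU2
  set V2 : ℚ := ∏ c ∈ (RC ν).filter (fun c => c₀ ≤ c), ((G ν c + 1 - G ν c₀ : ℤ) : ℚ) with hV2
  set Rest : ℚ := ∏ y ∈ ν.cells.filter (fun y => ¬(y.1 = r₀ ∨ y.2 = c₀)), (hookLen ν y : ℚ)
    with hRest
  set k : ℕ := #((AC ν).filter (fun c => c₀ < c)) with hk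
  -- side 1
  have hside1 : R1 * U = R1' * V := side_prod ν c₀ h
  -- side 2 : via transpose
  have hside2 : C1 * U2 = C1' * V2 := by
    have hT := side_prod ν.transpose r₀ (addP_transpose ν h)
    have hcolT : ν.transpose.colLen r₀ = c₀ := by
      rw [YoungDiagram.colLen_transpose]; exact hr
    rw [hcolT] at hT
    have hhook : ∀ j ∈ range r₀, (hookLen ν.transpose (c₀, j) : ℚ) = (hookLen ν (j, c₀) : ℚ) := by
      intro j hj
      rw [mem_range] at hj
      have : (j, c₀) ∈ ν := mem_nu_of_lt_colLen (by omega)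
      exact_mod_cast congrArg (Nat.cast (R := ℚ)) (hook_transpose ν this)
    have e1 : ∏ j ∈ range r₀, (hookLen ν.transpose (c₀, j) : ℚ) = C1 := by
      rw [hC1]; exact prod_congr rfl hhook
    have e2 : ∏ j ∈ range r₀, ((hookLen ν.transpose (c₀, j) : ℚ) + 1) = C1' := by
      rw [hC1']
      refine prod_congr rfl fun j hj => ?_
      rw [hhook j hj]
    rw [e1, e2] at hT
    rw [hU2, hV2, addT_prod_conv ν c₀ h, dropT_prod_conv ν c₀ h]
    exact hT
  -- split of the AC-product
  have hSA : ∏ c ∈ (AC ν).erase c₀, ((G ν c₀ - G ν c : ℤ) : ℚ) = U * ((-1)^k * U2) := by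
    rw [← prod_filter_mul_prod_filter_not ((AC ν).erase c₀) (fun c => c < c₀)]
    congr 1
    · rw [hU]
      apply prod_congr _ (fun _ _ => rfl)
      ext c
      simp only [mem_filter, mem_erase, mem_range, mem_AC]
      constructor
      · rintro ⟨⟨hne, hAC⟩, hlt⟩; exact ⟨hlt, hAC⟩
      · rintro ⟨hlt, hAC⟩; exact ⟨⟨by omega, hAC⟩, hlt⟩
    · have hset : ((AC ν).erase c₀).filter (fun c => ¬ c < c₀) =
          (AC ν).filter (fun c => c₀ < c) := by
        ext c
        simp only [mem_filter, mem_erase]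
        constructor
        · rintro ⟨⟨hne, hAC⟩, hge⟩; exact ⟨hAC, by omega⟩
        · rintro ⟨hAC, hlt⟩; exact ⟨⟨by omega, hAC⟩, by omega⟩
      rw [hset, hU2, hk, ← prod_const, ← prod_mul_distrib]
      refine prod_congr rfl fun c hc => ?_
      push_cast
      ring
  -- split of the RC-product
  have hSR : ∏ c ∈ RC ν, ((G ν c₀ - G ν c - 1 : ℤ) : ℚ) = V * ((-1)^k * V2) := by
    rw [← prod_filter_mul_prod_filter_not (RC ν) (fun c => c < c₀)]
    congr 1
    · rw [hV]
      apply prod_congr _ (fun _ _ => rfl)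
      ext c
      simp only [mem_filter, mem_range, mem_RC]
      tauto
    · have hset : (RC ν).filter (fun c => ¬ c < c₀) = (RC ν).filter (fun c => c₀ ≤ c) := by
        ext c
        simp only [mem_filter, not_lt]
      rw [hset, hV2, hk, ← card_conv ν c₀, ← prod_const, ← prod_mul_distrib]
      refine prod_congr rfl fun c hc => ?_
      push_cast
      ring
  -- decomposition of the two hook products
  have hx : (r₀, c₀) ∉ ν.cells := by
    rw [YoungDiagram.mem_cells]; exact corner_not_mem ν c₀
  have hμprod : ∏ y ∈ μ.cells, (hookLen μ y : ℚ) = R1' * C1' * Rest := by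
    rw [hμ, prod_insert hx, hookLen_insert_self ν μ c₀ hμ]
    rw [prod_congr rfl (fun y hy => hookLen_insert_of_mem ν μ c₀ h hμ (hy := hy))]
    rw [prod_split ν r₀ c₀ hr rfl _]
    rw [Nat.cast_one, one_mul]
    congr 1
    · congr 1
      · rw [hR1']
        refine prod_congr rfl fun j _ => ?_
        rw [if_pos (Or.inl rfl)]
      · rw [hC1']
        refine prod_congr rfl fun r _ => ?_
        rw [if_pos (Or.inr rfl)]
    · rw [hRest]
      refine prod_congr rfl fun y hy => ?_
      rw [mem_filter] at hy
      rw [if_neg hy.2, add_zero]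
  have hνprod : ∏ y ∈ ν.cells, (hookLen ν y : ℚ) = R1 * C1 * Rest :=
    prod_split ν r₀ c₀ hr rfl _
  rw [hμprod, hνprod, hSA, hSR]
  linear_combination (-(C1' * V2 * (-1)^k * Rest)) * hside1 + (-(R1 * U * (-1)^k * Rest)) * hside2


lemma basis_eq_C_mul_nodal {F : Type*} [Field F] {ι : Type*} [DecidableEq ι]
    (s : Finset ι) (v : ι → F) (i : ι) :
    Lagrange.basis s v i = C (Lagrange.nodalWeight s v i) * Lagrange.nodal (s.erase i) v := by
  rw [Lagrange.basis, Lagrange.nodalWeight, Lagrange.nodal, map_prod, ← prod_mul_distrib]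
  refine prod_congr rfl fun j _ => ?_
  rw [Lagrange.basisDivisor]

lemma coeff_basis {F : Type*} [Field F] {ι : Type*} [DecidableEq ι]
    {s : Finset ι} {v : ι → F} {i : ι} (hvs : Set.InjOn v s) (hi : i ∈ s) :
    (Lagrange.basis s v i).coeff (#s - 1) = Lagrange.nodalWeight s v i := by
  rw [basis_eq_C_mul_nodal, coeff_C_mul]
  have h1 : (Lagrange.nodal (s.erase i) v).natDegree = #s - 1 := by
    rw [Lagrange.natDegree_nodal, card_erase_of_mem hi]
  rw [← h1, Lagrange.nodal_monic.coeff_natDegree, mul_one]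

lemma lagrange_sum_zero {F : Type*} [Field F] {ι : Type*} [DecidableEq ι]
    (s : Finset ι) (v : ι → F) (hvs : Set.InjOn v s) (Q : F[X])
    (hdeg : Q.degree < ((#s - 1 : ℕ) : WithBot ℕ)) :
    ∑ a ∈ s, Q.eval (v a) * (∏ b ∈ s.erase a, (v a - v b))⁻¹ = 0 := by
  have hlt : Q.degree < (#s : WithBot ℕ) := by
    refine lt_of_lt_of_le hdeg ?_
    exact_mod_cast Nat.sub_le _ _
  have hQ := Lagrange.eq_interpolate hvs hlt
  have h0 : Q.coeff (#s - 1) = 0 := coeff_eq_zero_of_degree_lt hdeg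
  rw [hQ, Lagrange.interpolate_apply, finset_sum_coeff] at h0
  rw [← h0]
  refine sum_congr rfl fun a ha => ?_
  rw [coeff_C_mul, coeff_basis hvs ha, Lagrange.nodalWeight, ← prod_inv_distrib]

lemma hookLen_pos {ν : YoungDiagram} {y : ℕ × ℕ} (hy : y ∈ ν.cells) : 0 < hookLen ν y := by
  rw [hookLen, card_pos]
  exact ⟨y, mem_filter.mpr ⟨hy, Or.inl ⟨rfl, le_rfl⟩⟩⟩

lemma prod_hooks_ne_zero (ν : YoungDiagram) : (∏ y ∈ ν.cells, (hookLen ν y : ℚ)) ≠ 0 := by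
  refine prod_ne_zero_iff.mpr fun y hy => ?_
  have := hookLen_pos hy
  positivity

lemma G_add_ne (l : YoungDiagram) {c₀ c : ℕ} (h₀ : AddP l c₀) (h : DropP l c) :
    G l c₀ ≠ G l c + 1 := by
  rcases le_or_gt c₀ c with hle | hlt
  · have : G l c₀ ≤ G l c := (G_strictMono l).monotone hle
    omega
  · have h1 : G l (c+1) ≤ G l c₀ := (G_strictMono l).monotone (by omega)
    have h2 : l.colLen (c+1) < l.colLen c := h
    unfold G at *
    have h3 : ((c:ℤ)+1) - l.colLen (c+1) ≥ ((c:ℤ) - l.colLen c) + 2 := by push_cast; omega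
    push_cast at *
    omega


/-- For a Young diagram `λ` and `i ∈ B⁻(λ)`: `Σ_{j ∈ B⁺(λ)} d_{λ⊞j}/(j−i) = 0`. -/
theorem sum_dim_add_over_diff_eq_zero (l : YoungDiagram)
    (i : ℤ) (hi : i ∈ Bminus l)
    (S : Finset ℤ) (hS : ∀ j : ℤ, j ∈ S ↔ j ∈ Bplus l)
    (D : ℤ → YoungDiagram) (hD : ∀ j ∈ S, AddBox l j (D j)) :
    ∑ j ∈ S, dimPart (D j) / ((j : ℚ) - (i : ℚ)) = 0 := by

  classical
  obtain ⟨x, hrem, hconti⟩ := hi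
  obtain ⟨hx1, hx2⟩ := removable_imp l x hrem
  have hciRC : x.2 ∈ RC l := mem_RC.mpr hx2
  have hiG : i = G l x.2 + 1 := by
    rw [← hconti]; unfold _root_.content G; omega
  have hSim : S = (AC l).image (fun c => G l c) := by
    ext j
    rw [hS j, mem_image]
    constructor
    · rintro ⟨z, haddable, hcont⟩
      obtain ⟨h1, h2⟩ := (addable_iff l z).mp haddable
      exact ⟨z.2, mem_AC.mpr h2, by rw [← hcont]; unfold _root_.content G; omega⟩
    · rintro ⟨c, hc, rfl⟩
      exact ⟨(l.colLen c, c), (addable_iff l _).mpr ⟨rfl, mem_AC.mp hc⟩,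
        by unfold _root_.content G; simp⟩
  have hGinj : ∀ a ∈ AC l, ∀ b ∈ AC l, G l a = G l b → a = b :=
    fun a _ b _ hab => (G_strictMono l).injective hab
  rw [hSim, sum_image hGinj]
  set n := l.card with hn
  set Hl : ℚ := ∏ y ∈ l.cells, (hookLen l y : ℚ) with hHl
  have hHl0 : Hl ≠ 0 := prod_hooks_ne_zero l
  set v : ℕ → ℚ := fun c => ((G l c : ℤ) : ℚ) with hv
  set Q : Polynomial ℚ := ∏ c ∈ (RC l).erase x.2,
    (Polynomial.X - Polynomial.C (((G l c + 1 : ℤ)) : ℚ)) with hQ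
  have hQeval : ∀ c₀ : ℕ, Q.eval (v c₀) = ∏ c ∈ (RC l).erase x.2,
      ((G l c₀ - G l c - 1 : ℤ) : ℚ) := by
    intro c₀
    rw [hQ, Polynomial.eval_prod]
    refine prod_congr rfl fun c _ => ?_
    rw [Polynomial.eval_sub, Polynomial.eval_X, Polynomial.eval_C]
    push_cast
    ring
  have hterm : ∀ c₀ ∈ AC l, dimPart (D (G l c₀)) / (((G l c₀ : ℤ) : ℚ) - (i : ℚ)) =
      ((Nat.factorial (n+1) : ℚ) / Hl) *
        (Q.eval (v c₀) * (∏ b ∈ (AC l).erase c₀, (v c₀ - v b))⁻¹) := by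
    intro c₀ hc₀
    have hc₀AC : AddP l c₀ := mem_AC.mp hc₀
    -- identify the diagram D (G l c₀)
    obtain ⟨z, haddable, hcont, hcells⟩ := hD (G l c₀) (by
      rw [hSim]; exact mem_image.mpr ⟨c₀, hc₀, rfl⟩)
    obtain ⟨hz1, hz2⟩ := (addable_iff l z).mp haddable
    have hzc : z.2 = c₀ := by
      refine (G_strictMono l).injective ?_
      rw [← hcont]
      unfold _root_.content G
      omega
    have hzz : z = (l.colLen c₀, c₀) := by
      rw [← hzc]
      exact Prod.ext hz1 rfl
    rw [hzz] at hcells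
    -- cardinality
    have hcard : (D (G l c₀)).card = n + 1 := by
      show (D (G l c₀)).cells.card = n + 1
      rw [hcells, card_insert_of_notMem (by
        rw [YoungDiagram.mem_cells]; exact corner_not_mem l c₀)]
    -- hook ratio
    have hratio := hook_ratio l (D (G l c₀)) c₀ hc₀AC hcells
    set Hm : ℚ := ∏ y ∈ (D (G l c₀)).cells, (hookLen (D (G l c₀)) y : ℚ) with hHm
    have hHm0 : Hm ≠ 0 := prod_hooks_ne_zero _
    -- nonvanishing of the products
    have hPA0 : (∏ b ∈ (AC l).erase c₀, (v c₀ - v b)) ≠ 0 := by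
      refine prod_ne_zero_iff.mpr fun b hb => ?_
      rw [mem_erase] at hb
      have : G l c₀ ≠ G l b := fun hEq => hb.1 ((G_strictMono l).injective hEq.symm)
      rw [hv]
      simp only [ne_eq, sub_eq_zero]
      exact_mod_cast fun hEq => this (by exact_mod_cast hEq)
    have hq0 : Q.eval (v c₀) ≠ 0 := by
      rw [hQeval]
      refine prod_ne_zero_iff.mpr fun c hc => ?_
      have hcRC : c ∈ RC l := mem_erase.mp hc |>.2
      have hne := G_add_ne l hc₀AC (mem_RC.mp hcRC)
      have h2 : (G l c₀ - G l c - 1 : ℤ) ≠ 0 := by omega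
      exact Int.cast_ne_zero.mpr h2
    have hvi0 : ((G l c₀ : ℤ) : ℚ) - (i : ℚ) ≠ 0 := by
      have hne := G_add_ne l hc₀AC (mem_RC.mp hciRC)
      rw [hiG]
      exact_mod_cast sub_ne_zero.mpr hne
    -- split the RC product
    have hPR : ∏ c ∈ RC l, ((G l c₀ - G l c - 1 : ℤ) : ℚ)
        = (((G l c₀ : ℤ) : ℚ) - (i : ℚ)) * Q.eval (v c₀) := by
      rw [← mul_prod_erase (RC l) _ hciRC, hQeval]
      congr 1
      rw [hiG]
      push_cast
      ring
    -- the ratio identity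
    have hkey : Hm * ((((G l c₀ : ℤ) : ℚ) - (i : ℚ)) * Q.eval (v c₀))
        = Hl * ∏ b ∈ (AC l).erase c₀, (v c₀ - v b) := by
      rw [← hPR]
      rw [hHm, hHl]
      rw [hratio]
      congr 1
      refine prod_congr rfl fun b _ => ?_
      rw [hv]
      push_cast
      ring
    -- dimension formula
    have hdim : dimPart (D (G l c₀)) = (Nat.factorial (n+1) : ℚ) / Hm := by
      rw [dimPart, hcard, hHm]
    rw [hdim]
    rw [div_div]
    field_simp
    linear_combination (-1 : ℚ) * hkey
  rw [sum_congr rfl hterm, ← mul_sum]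
  have hlag : ∑ c₀ ∈ AC l, Q.eval (v c₀) * (∏ b ∈ (AC l).erase c₀, (v c₀ - v b))⁻¹ = 0 := by
    refine lagrange_sum_zero (AC l) v ?_ Q ?_
    · intro a ha b hb hab
      simp only [hv] at hab
      exact hGinj a (mem_coe.mp ha) b (mem_coe.mp hb) (by exact_mod_cast hab)
    have hQ0 : Q ≠ 0 := by
      rw [hQ]
      exact prod_ne_zero_iff.mpr fun c _ => Polynomial.X_sub_C_ne_zero _
    have hdegQ : Q.natDegree = #(RC l) - 1 := by
      rw [hQ, Polynomial.natDegree_prod _ _ (fun c _ => Polynomial.X_sub_C_ne_zero _)]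
      rw [← card_erase_of_mem hciRC]
      rw [sum_congr rfl (fun c _ => Polynomial.natDegree_X_sub_C (((G l c + 1 : ℤ)) : ℚ)),
        sum_const, smul_eq_mul, mul_one]
    rw [Polynomial.degree_eq_natDegree hQ0, hdegQ, card_AC]
    have h1 : 1 ≤ #(RC l) := card_pos.mpr ⟨x.2, hciRC⟩
    rw [Nat.add_sub_cancel]
    exact_mod_cast Nat.sub_lt h1 one_pos
  rw [hlag, mul_zero]
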